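/- Let f, g₁, …, g_m be convex polynomials on ℝ^n with K = {x : gᵢ(x) ≤ 0 for all i} nonempty, let x* minimize f over K, and let ε > 0. Then there exist λ₁, …, λ_m ≥ 0 such that f(x) − f(x*) + Σᵢ λᵢ gᵢ(x) + ε > 0 for all x ∈ ℝ^n. -/

import Mathlib

open MvPolynomial Polynomial

lemma mv_aeval_eq_eval {n : ℕ} (y : Fin n → ℝ) (p : MvPolynomial (Fin n) ℝ) :
    MvPolynomial.aeval y p = MvPolynomial.eval y p := by
  rw [MvPolynomial.aeval_def, MvPolynomial.eval, Algebra.algebraMap_self]; rfl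

lemma line_restrict {n : ℕ} (p : MvPolynomial (Fin n) ℝ) (x v : Fin n → ℝ) :
    ∃ q : Polynomial ℝ, ∀ t : ℝ,
      q.eval t = MvPolynomial.eval (fun i => x i + t * v i) p := by
  refine ⟨MvPolynomial.aeval (fun i => Polynomial.C (x i) + Polynomial.C (v i) * Polynomial.X) p, fun t => ?_⟩
  have h := MvPolynomial.comp_aeval_apply (Polynomial.aeval t :  Polynomial ℝ →ₐ[ℝ] ℝ)
      (f := fun i => Polynomial.C (x i) + Polynomial.C (v i) * Polynomial.X) p
  have h2 : ∀ z : Polynomial ℝ, (Polynomial.aeval t : Polynomial ℝ →ₐ[ℝ] ℝ) z = Polynomial.eval t z := fun z => by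
    rw [← Polynomial.coe_aeval_eq_eval]
  rw [h2] at h
  rw [h, ← mv_aeval_eq_eval]
  have h3 : (fun i => (Polynomial.aeval t) (Polynomial.C (x i) + Polynomial.C (v i) * Polynomial.X)) = fun i => x i + t * v i := by
    funext i; rw [map_add, map_mul, Polynomial.aeval_C, Polynomial.aeval_X]; simp [mul_comm]
  rw [h3]

open Polynomial Filter

/-- A convex univariate polynomial bounded above on `[0, ∞)` is affine with
nonpositive slope. -/
lemma univar_convex_bddAbove (φ : Polynomial ℝ) (c : ℝ)
    (hconv : ConvexOn ℝ Set.univ fun t : ℝ => φ.eval t)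
    (hbd : ∀ t : ℝ, 0 ≤ t → φ.eval t ≤ c) :
    ∃ b : ℝ, b ≤ 0 ∧ ∀ t, φ.eval t = φ.eval 0 + b * t := by
  by_cases hdeg : φ.natDegree ≤ 1
  · have hrep := Polynomial.eq_X_add_C_of_natDegree_le_one hdeg
    have heval : ∀ t : ℝ, φ.eval t = φ.coeff 1 * t + φ.coeff 0 := by
      intro t; conv_lhs => rw [hrep]
      simp
    refine ⟨φ.coeff 1, ?_, ?_⟩
    · by_contra hbpos
      push_neg at hbpos
      have h0' : φ.coeff 0 ≤ c := by
        have := hbd 0 le_rfl; rw [heval 0] at this; linarith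
      have htnn : 0 ≤ (c - φ.coeff 0) / φ.coeff 1 + 1 := by
        have : 0 ≤ (c - φ.coeff 0) / φ.coeff 1 := div_nonneg (by linarith) hbpos.le
        linarith
      have h2 := hbd _ htnn
      rw [heval] at h2
      have h3 : φ.coeff 1 * ((c - φ.coeff 0) / φ.coeff 1 + 1)
          = (c - φ.coeff 0) + φ.coeff 1 := by
        field_simp
      rw [h3] at h2
      linarith
    · intro t; rw [heval t, heval 0]; ring
  · exfalso
    push_neg at hdeg
    set q := φ.divX with hq
    have hqdeg : 1 ≤ q.natDegree := by
      rw [hq, Polynomial.natDegree_divX_eq_natDegree_tsub_one]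
      omega
    have hqdeg' : 0 < q.degree :=
      Polynomial.natDegree_pos_iff_degree_pos.mp hqdeg
    have hid : ∀ t : ℝ, φ.eval t = q.eval t * t + φ.coeff 0 := by
      intro t
      conv_lhs => rw [← Polynomial.divX_mul_X_add φ]
      simp [hq]
    have hqB : ∀ t : ℝ, 1 ≤ t → q.eval t ≤ |c| + |φ.coeff 0| := by
      intro t ht
      by_contra hgt
      push_neg at hgt
      have hBnn : (0:ℝ) ≤ |c| + |φ.coeff 0| := by positivity
      have h2 := hbd t (by linarith)
      rw [hid t] at h2
      nlinarith [le_abs_self c, neg_abs_le (φ.coeff 0), le_abs_self (φ.coeff 0)]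
    set E : ℝ := |c| + 2*|φ.eval 0| + 2*|φ.coeff 0| + |φ.eval (-1)| + 1 with hE
    have habs := Polynomial.abs_tendsto_atTop q hqdeg'
    have hev : ∀ᶠ t : ℝ in atTop, E ≤ |q.eval t| := habs.eventually (eventually_ge_atTop E)
    obtain ⟨t, ht1, htE⟩ := ((eventually_ge_atTop (1:ℝ)).and hev).exists
    have ht0 : (0:ℝ) < t := by linarith
    have hEB : |c| + |φ.coeff 0| < E := by
      have := abs_nonneg (φ.eval 0); have := abs_nonneg (φ.eval (-1))
      have := abs_nonneg (φ.coeff 0)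
      rw [hE]; linarith
    have hqt : q.eval t ≤ -E := by
      rcases abs_cases (q.eval t) with ⟨he, _⟩ | ⟨he, _⟩
      · exfalso; have h1 := hqB t ht1; rw [he] at htE; linarith
      · rw [he] at htE; linarith
    have hcomb := hconv.2 (Set.mem_univ (-1 : ℝ)) (Set.mem_univ t)
      (show (0:ℝ) ≤ t/(t+1) by positivity) (show (0:ℝ) ≤ 1/(t+1) by positivity)
      (show t/(t+1) + 1/(t+1) = 1 by field_simp)
    simp only [smul_eq_mul] at hcomb
    have hne : t + 1 ≠ 0 := by linarith
    have hzero : t/(t+1) * (-1 : ℝ) + (1/(t+1)) * t = 0 := by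
      field_simp
      ring
    rw [hzero] at hcomb
    have hcomb' : (t+1) * φ.eval 0 ≤ t * φ.eval (-1) + φ.eval t := by
      have ht1' : (0:ℝ) < t + 1 := by linarith
      have h4 := mul_le_mul_of_nonneg_left hcomb ht1'.le
      calc (t+1) * φ.eval 0
          ≤ (t+1) * (t/(t+1) * φ.eval (-1) + 1/(t+1) * φ.eval t) := h4
        _ = t * φ.eval (-1) + φ.eval t := by field_simp
    rw [hid t] at hcomb'
    have p1 : q.eval t * t ≤ (-E) * t := mul_le_mul_of_nonneg_right hqt ht0.le
    have p2 : t * φ.eval (-1) ≤ t * |φ.eval (-1)| :=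
      mul_le_mul_of_nonneg_left (le_abs_self _) ht0.le
    have p3 : (t+1) * (-|φ.eval 0|) ≤ (t+1) * φ.eval 0 :=
      mul_le_mul_of_nonneg_left (neg_abs_le _) (by linarith)
    have p4 : φ.coeff 0 ≤ |φ.coeff 0| := le_abs_self _
    have p6 : 0 ≤ (t-1) * |φ.eval 0| := mul_nonneg (by linarith) (abs_nonneg _)
    have p7 : 0 ≤ |c| * t := mul_nonneg (abs_nonneg _) ht0.le
    have p8 : 0 ≤ (2*t-1) * |φ.coeff 0| := mul_nonneg (by linarith) (abs_nonneg _)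
    rw [hE] at p1
    nlinarith [hcomb', p1, p2, p3, p4, p6, p7, p8, ht1]


lemma eval_ext {n : ℕ} (p : MvPolynomial (Fin n) ℝ) {x y : Fin n → ℝ}
    (h : ∀ i, x i = y i) : MvPolynomial.eval x p = MvPolynomial.eval y p :=
  congrArg (fun z => MvPolynomial.eval z p) (funext h)

lemma convexOn_line {n : ℕ} (h : (Fin n → ℝ) → ℝ) (hc : ConvexOn ℝ Set.univ h)
    (x v : Fin n → ℝ) :
    ConvexOn ℝ Set.univ fun t : ℝ => h (fun i => x i + t * v i) := by
  refine ⟨convex_univ, ?_⟩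
  intro s _ t _ a b ha hb hab
  have key : (fun i => x i + (a • s + b • t) * v i)
      = a • (fun i => x i + s * v i) + b • (fun i => x i + t * v i) := by
    funext i
    simp only [Pi.add_apply, Pi.smul_apply, smul_eq_mul]
    linear_combination (-(x i)) * hab
  simp only [smul_eq_mul] at key ⊢
  rw [key]
  exact hc.2 (Set.mem_univ _) (Set.mem_univ _) ha hb hab

/-- A convex polynomial bounded above on `ℝⁿ` is constant. -/
lemma convex_poly_bddAbove_const {n : ℕ} (p : MvPolynomial (Fin n) ℝ) (c : ℝ)
    (hconv : ConvexOn ℝ Set.univ fun x : Fin n → ℝ => MvPolynomial.eval x p)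
    (hbd : ∀ x, MvPolynomial.eval x p ≤ c) (x y : Fin n → ℝ) :
    MvPolynomial.eval x p = MvPolynomial.eval y p := by
  obtain ⟨q, hq⟩ := line_restrict p x (fun i => y i - x i)
  have hqc : ConvexOn ℝ Set.univ fun t : ℝ => q.eval t := by
    have := convexOn_line (fun z => MvPolynomial.eval z p) hconv x (fun i => y i - x i)
    convert this using 1
    funext t; rw [hq]
  have hqb : ∀ t : ℝ, q.eval t ≤ c := fun t => by rw [hq]; exact hbd _
  obtain ⟨b, hble, hrep⟩ := univar_convex_bddAbove q c hqc (fun t _ => hqb t)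
  have hb0 : b = 0 := by
    by_contra hbne
    have hblt : b < 0 := lt_of_le_of_ne hble hbne
    have := hqb ((c - q.eval 0)/b - 1)
    rw [hrep] at this
    have h3 : b * ((c - q.eval 0)/b - 1) = (c - q.eval 0) - b := by field_simp
    rw [h3] at this
    linarith
  have h0 : q.eval 0 = MvPolynomial.eval x p := by
    rw [hq]; exact eval_ext p (fun i => by ring)
  have h1 : q.eval 1 = MvPolynomial.eval y p := by
    rw [hq]; exact eval_ext p (fun i => by ring)
  rw [← h0, ← h1, hrep 1, hb0]; ring

lemma slope_convex_aux {n : ℕ} (p pγ : MvPolynomial (Fin n) ℝ)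
    (hconv : ConvexOn ℝ Set.univ fun x : Fin n → ℝ => MvPolynomial.eval x p)
    (d : Fin n → ℝ)
    (haff : ∀ (x : Fin n → ℝ) (t : ℝ),
      MvPolynomial.eval (fun i => x i + t * d i) p
        = MvPolynomial.eval x p + t * MvPolynomial.eval x pγ) :
    ConvexOn ℝ Set.univ fun x : Fin n → ℝ => MvPolynomial.eval x pγ := by
  refine ⟨convex_univ, ?_⟩
  intro u _ v _ a b ha hb hab
  simp only [smul_eq_mul]
  have hsh : ∀ t : ℝ, (fun i => (a • u + b • v) i + t * d i)
      = a • (fun i => u i + t * d i) + b • (fun i => v i + t * d i) := by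
    intro t
    funext i
    simp only [Pi.add_apply, Pi.smul_apply, smul_eq_mul]
    linear_combination (-(t * d i)) * hab
  have hineq : ∀ t : ℝ,
      MvPolynomial.eval (a • u + b • v) p + t * MvPolynomial.eval (a • u + b • v) pγ
        ≤ a * (MvPolynomial.eval u p + t * MvPolynomial.eval u pγ)
          + b * (MvPolynomial.eval v p + t * MvPolynomial.eval v pγ) := by
    intro t
    have hcv := hconv.2 (Set.mem_univ (fun i => u i + t * d i))
      (Set.mem_univ (fun i => v i + t * d i)) ha hb hab
    rw [← hsh t] at hcv
    simp only [smul_eq_mul] at hcv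
    rw [haff, haff, haff] at hcv
    exact hcv
  have hB : 0 ≤ a * MvPolynomial.eval u p + b * MvPolynomial.eval v p
      - MvPolynomial.eval (a • u + b • v) p := by
    have := hineq 0
    simp only [zero_mul, mul_zero, add_zero] at this
    linarith
  by_contra hgt
  push_neg at hgt
  set Gz := MvPolynomial.eval (a • u + b • v) pγ with hGz
  set Gu := MvPolynomial.eval u pγ with hGu
  set Gv := MvPolynomial.eval v pγ with hGv
  set s := Gz - (a * Gu + b * Gv) with hs
  have hspos : 0 < s := by rw [hs]; linarith
  set B := a * MvPolynomial.eval u p + b * MvPolynomial.eval v p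
      - MvPolynomial.eval (a • u + b • v) p with hBd
  have hkey : ∀ t : ℝ, t * s ≤ B := by
    intro t
    have := hineq t
    rw [hs, hBd]; nlinarith [this]
  have := hkey ((B + 1)/s)
  rw [div_mul_cancel₀ (B+1) (ne_of_gt hspos)] at this
  linarith

/-- If a convex polynomial is bounded above on one ray in direction `d`, then it is
affine with a fixed nonpositive slope along every line in direction `d`. -/
lemma ray_affine {n : ℕ} (p : MvPolynomial (Fin n) ℝ)
    (hconv : ConvexOn ℝ Set.univ fun x : Fin n → ℝ => MvPolynomial.eval x p)
    (x₀ d : Fin n → ℝ) (c : ℝ)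
    (hbd : ∀ t : ℝ, 0 ≤ t → MvPolynomial.eval (fun i => x₀ i + t * d i) p ≤ c) :
    ∃ γ : ℝ, γ ≤ 0 ∧ ∀ (x : Fin n → ℝ) (t : ℝ),
      MvPolynomial.eval (fun i => x i + t * d i) p
        = MvPolynomial.eval x p + t * γ := by
  classical
  -- Step 1: boundedness along every ray in direction d
  have step1 : ∀ x : Fin n → ℝ, ∀ t : ℝ, 0 ≤ t →
      MvPolynomial.eval (fun i => x i + t * d i) p
        ≤ c/2 + MvPolynomial.eval (fun i => 2 * x i - x₀ i) p / 2 := by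
    intro x t ht
    have key : (fun i => x i + t * d i)
        = (1/2 : ℝ) • (fun i => x₀ i + (2*t) * d i)
          + (1/2 : ℝ) • (fun i => 2 * x i - x₀ i) := by
      funext i
      simp only [Pi.add_apply, Pi.smul_apply, smul_eq_mul]
      ring
    have hcv := hconv.2 (Set.mem_univ (fun i => x₀ i + (2*t) * d i))
      (Set.mem_univ (fun i => 2 * x i - x₀ i))
      (show (0:ℝ) ≤ 1/2 by norm_num) (show (0:ℝ) ≤ 1/2 by norm_num)
      (show (1:ℝ)/2 + 1/2 = 1 by norm_num)
    rw [← key] at hcv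
    simp only [smul_eq_mul] at hcv
    have hb := hbd (2*t) (by linarith)
    linarith
  -- Step 2: affineness along each line, slope = eval (x+d) - eval x
  have step2 : ∀ x : Fin n → ℝ,
      (MvPolynomial.eval (fun i => x i + d i) p - MvPolynomial.eval x p ≤ 0) ∧
      ∀ t : ℝ, MvPolynomial.eval (fun i => x i + t * d i) p
        = MvPolynomial.eval x p
          + t * (MvPolynomial.eval (fun i => x i + d i) p - MvPolynomial.eval x p) := by
    intro x
    obtain ⟨q, hq⟩ := line_restrict p x d
    have hqc : ConvexOn ℝ Set.univ fun t : ℝ => q.eval t := by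
      have := convexOn_line (fun z => MvPolynomial.eval z p) hconv x d
      convert this using 1
      funext t; rw [hq]
    have hqb : ∀ t : ℝ, 0 ≤ t →
        q.eval t ≤ c/2 + MvPolynomial.eval (fun i => 2 * x i - x₀ i) p / 2 := by
      intro t ht; rw [hq]; exact step1 x t ht
    obtain ⟨b, hble, hrep⟩ := univar_convex_bddAbove q _ hqc hqb
    have h0 : q.eval 0 = MvPolynomial.eval x p := by
      rw [hq]; exact eval_ext p (fun i => by ring)
    have h1 : q.eval 1 = MvPolynomial.eval (fun i => x i + d i) p := by
      rw [hq]; exact eval_ext p (fun i => by ring)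
    have hbval : b = MvPolynomial.eval (fun i => x i + d i) p - MvPolynomial.eval x p := by
      have h2 := hrep 1
      rw [h0, h1] at h2
      linarith
    constructor
    · rw [← hbval]; exact hble
    · intro t
      have h2 := hrep t
      rw [h0, hq t, hbval] at h2
      rw [h2]; ring
  -- Step 3: the slope as a polynomial
  set pγ : MvPolynomial (Fin n) ℝ :=
    (MvPolynomial.aeval (fun i => MvPolynomial.X i + MvPolynomial.C (d i))) p - p with hpγ
  have hγeval : ∀ x : Fin n → ℝ,
      MvPolynomial.eval x pγ
        = MvPolynomial.eval (fun i => x i + d i) p - MvPolynomial.eval x p := by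
    intro x
    rw [hpγ, map_sub]
    have h := MvPolynomial.comp_aeval_apply
      (MvPolynomial.aeval x : MvPolynomial (Fin n) ℝ →ₐ[ℝ] ℝ)
      (f := fun i => MvPolynomial.X i + MvPolynomial.C (d i)) p
    rw [mv_aeval_eq_eval] at h
    have h2 : (fun i => (MvPolynomial.aeval x : MvPolynomial (Fin n) ℝ →ₐ[ℝ] ℝ)
        (MvPolynomial.X i + MvPolynomial.C (d i))) = fun i => x i + d i := by
      funext i
      rw [map_add, MvPolynomial.aeval_X, MvPolynomial.aeval_C]
      simp
    rw [h2] at h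
    rw [mv_aeval_eq_eval] at h
    rw [h]
  have hA : ∀ (x : Fin n → ℝ) (t : ℝ),
      MvPolynomial.eval (fun i => x i + t * d i) p
        = MvPolynomial.eval x p + t * MvPolynomial.eval x pγ := by
    intro x t
    rw [(step2 x).2 t, hγeval x]
  have hγconv : ConvexOn ℝ Set.univ fun x : Fin n → ℝ => MvPolynomial.eval x pγ :=
    slope_convex_aux p pγ hconv d hA
  -- Step 5: the slope polynomial is bounded above by 0, hence constant
  have hγbd : ∀ x, MvPolynomial.eval x pγ ≤ 0 := by
    intro x; rw [hγeval x]; exact (step2 x).1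
  refine ⟨MvPolynomial.eval x₀ pγ, hγbd x₀, fun x t => ?_⟩
  have hconst := convex_poly_bddAbove_const pγ 0 hγconv hγbd x x₀
  rw [(step2 x).2 t, ← hγeval x, hconst]

open Filter

lemma exists_recession_dir {n : ℕ} (S : Set (Fin n → ℝ)) (hcl : IsClosed S)
    (hcv : Convex ℝ S) (x₀ : Fin n → ℝ) (hx0 : x₀ ∈ S)
    (hub : ¬Bornology.IsBounded S) :
    ∃ d : Fin n → ℝ, d ≠ 0 ∧ ∀ t : ℝ, 0 ≤ t → (x₀ + t • d) ∈ S := by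
  rw [isBounded_iff_forall_norm_le] at hub
  push_neg at hub
  have hseq : ∀ k : ℕ, ∃ x ∈ S, (k : ℝ) + ‖x₀‖ + 1 < ‖x‖ := fun k => hub _
  choose xk hxkS hxknorm using hseq
  have hr : ∀ k : ℕ, (k : ℝ) + 1 ≤ ‖xk k - x₀‖ := by
    intro k
    have := norm_sub_norm_le (xk k) x₀
    have h2 := hxknorm k
    calc (k:ℝ) + 1 ≤ ‖xk k‖ - ‖x₀‖ := by linarith
    _ ≤ ‖xk k - x₀‖ := by linarith [norm_sub_norm_le (xk k) x₀]
  have hrpos : ∀ k : ℕ, 0 < ‖xk k - x₀‖ := fun k => by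
    have := hr k; have hk0 : (0:ℝ) ≤ k := Nat.cast_nonneg k; linarith
  set u : ℕ → (Fin n → ℝ) := fun k => (‖xk k - x₀‖)⁻¹ • (xk k - x₀) with hu
  have humem : ∀ k, u k ∈ Metric.sphere (0 : Fin n → ℝ) 1 := by
    intro k
    rw [Metric.mem_sphere, dist_zero_right, hu]
    rw [norm_smul, norm_inv, norm_norm]
    exact inv_mul_cancel₀ (ne_of_gt (hrpos k))
  obtain ⟨d, hdmem, ψ, hψmono, hψlim⟩ := (isCompact_sphere (0 : Fin n → ℝ) 1).tendsto_subseq humem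
  have hdnorm : ‖d‖ = 1 := by
    rw [Metric.mem_sphere, dist_zero_right] at hdmem; exact hdmem
  refine ⟨d, fun h => by simp [h] at hdnorm, fun t ht => ?_⟩
  have hmem : ∀ k : ℕ, t ≤ ‖xk k - x₀‖ → (x₀ + t • u k) ∈ S := by
    intro k hk
    have h1 : x₀ + t • u k
        = (1 - t / ‖xk k - x₀‖) • x₀ + (t / ‖xk k - x₀‖) • xk k := by
      have hne := ne_of_gt (hrpos k)
      rw [hu]
      simp only [div_eq_mul_inv]
      module
    rw [h1]
    have hdiv0 : 0 ≤ t / ‖xk k - x₀‖ := div_nonneg ht (hrpos k).le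
    have hdiv1 : t / ‖xk k - x₀‖ ≤ 1 := by
      rw [div_le_one (hrpos k)]; exact hk
    exact hcv hx0 (hxkS k) (by linarith) hdiv0 (by ring)
  -- pass to the limit
  have hlim : Tendsto (fun k => x₀ + t • u (ψ k)) atTop (nhds (x₀ + t • d)) := by
    exact tendsto_const_nhds.add (hψlim.const_smul t)
  refine hcl.mem_of_tendsto hlim ?_
  have hev : ∀ᶠ k : ℕ in atTop, t ≤ (k:ℝ) + 1 := by
    filter_upwards [eventually_ge_atTop (Nat.ceil t)] with k hkk
    have := Nat.le_ceil t
    have : (Nat.ceil t : ℝ) ≤ k := by exact_mod_cast hkk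
    linarith [Nat.le_ceil t]
  filter_upwards [hev] with k hkk
  have hψk : (k:ℝ) ≤ (ψ k : ℝ) := by exact_mod_cast (hψmono.id_le k)
  exact hmem (ψ k) (by linarith [hr (ψ k)])

open Filter

private lemma combo_neg {x y a b : ℝ} (hx : x < 0) (hy : y < 0) (ha : 0 ≤ a)
    (hb : 0 ≤ b) (hab : a + b = 1) : a * x + b * y < 0 := by
  rcases eq_or_lt_of_le ha with h | h
  · have hb1 : b = 1 := by linarith
    rw [← h, hb1]; linarith
  · nlinarith

lemma separation_multipliers {n m : ℕ} (f : (Fin n → ℝ) → ℝ) (g : Fin m → (Fin n → ℝ) → ℝ)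
    (hfc : ConvexOn ℝ Set.univ f) (hgc : ∀ i, ConvexOn ℝ Set.univ (g i))
    (xs : Fin n → ℝ) (hxs : ∀ i, g i xs ≤ 0) (δ ε : ℝ) (hδ : 0 < δ) (hε : 0 < ε)
    (hempty : ¬ ∃ x, (∀ i, g i x ≤ δ) ∧ f x ≤ f xs - ε/2) :
    ∃ lam : Fin m → ℝ, (∀ i, 0 ≤ lam i) ∧
      ∀ x, 0 < f x - f xs + (∑ i, lam i * g i x) + ε := by
  classical
  set s : Set ((Fin m → ℝ) × ℝ) := {p | (∀ i, p.1 i < 0) ∧ p.2 < 0} with hs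
  set C : Set ((Fin m → ℝ) × ℝ) :=
    {p | ∃ x, (∀ i, g i x - δ ≤ p.1 i) ∧ f x - f xs + ε/2 ≤ p.2} with hC
  have hs_open : IsOpen s := by
    have h : s = (⋂ i, {p : (Fin m → ℝ) × ℝ | p.1 i < 0})
        ∩ {p : (Fin m → ℝ) × ℝ | p.2 < 0} := by
      ext p; simp [hs, Set.mem_iInter]
    rw [h]
    exact IsOpen.inter
      (isOpen_iInter_of_finite fun i =>
        isOpen_lt ((continuous_apply i).comp continuous_fst) continuous_const)
      (isOpen_lt continuous_snd continuous_const)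
  have hs_conv : Convex ℝ s := by
    intro p hp q hq a b ha hb hab
    refine ⟨fun i => ?_, ?_⟩
    · simp only [Prod.fst_add, Prod.smul_fst, Pi.add_apply, Pi.smul_apply, smul_eq_mul]
      exact combo_neg (hp.1 i) (hq.1 i) ha hb hab
    · simp only [Prod.snd_add, Prod.smul_snd, smul_eq_mul]
      exact combo_neg hp.2 hq.2 ha hb hab
  have hC_conv : Convex ℝ C := by
    rintro p ⟨x, hpx, hpf⟩ q ⟨y, hqy, hqf⟩ a b ha hb hab
    refine ⟨a • x + b • y, fun i => ?_, ?_⟩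
    · have hgi := (hgc i).2 (Set.mem_univ x) (Set.mem_univ y) ha hb hab
      simp only [smul_eq_mul] at hgi
      simp only [Prod.fst_add, Prod.smul_fst, Pi.add_apply, Pi.smul_apply, smul_eq_mul]
      have h1 : a * (g i x - δ) ≤ a * p.1 i := mul_le_mul_of_nonneg_left (hpx i) ha
      have h2 : b * (g i y - δ) ≤ b * q.1 i := mul_le_mul_of_nonneg_left (hqy i) hb
      have heq : (a * g i x + b * g i y) - δ = a*(g i x - δ) + b*(g i y - δ) := by
        linear_combination δ * hab
      linarith [hgi, heq]
    · have hf := hfc.2 (Set.mem_univ x) (Set.mem_univ y) ha hb hab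
      simp only [smul_eq_mul] at hf
      simp only [Prod.snd_add, Prod.smul_snd, smul_eq_mul]
      have h1 : a * (f x - f xs + ε/2) ≤ a * p.2 := mul_le_mul_of_nonneg_left hpf ha
      have h2 : b * (f y - f xs + ε/2) ≤ b * q.2 := mul_le_mul_of_nonneg_left hqf hb
      have heq : (a * f x + b * f y) - f xs + ε/2
          = a*(f x - f xs + ε/2) + b*(f y - f xs + ε/2) := by
        linear_combination (f xs - ε/2) * hab
      linarith [hf, heq]
  have hdisj : Disjoint s C := by
    rw [Set.disjoint_left]
    rintro p ⟨hp1, hp2⟩ ⟨x, hx1, hx2⟩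
    exact hempty ⟨x, fun i => by have := hx1 i; have := hp1 i; linarith,
      by linarith⟩
  obtain ⟨φ, u₀, hφs, hφC⟩ := geometric_hahn_banach_open hs_conv hs_open hC_conv hdisj
  set lam0 : Fin m → ℝ := fun i => φ ((Pi.single i 1 : Fin m → ℝ), (0:ℝ)) with hlam0
  set μ : ℝ := φ ((0 : Fin m → ℝ), (1:ℝ)) with hμ
  have hdecomp : ∀ p : (Fin m → ℝ) × ℝ, φ p = (∑ i, p.1 i * lam0 i) + p.2 * μ := by
    intro p
    have hp : p = (∑ i, p.1 i • ((Pi.single i 1 : Fin m → ℝ), (0:ℝ)))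
        + p.2 • ((0 : Fin m → ℝ), (1:ℝ)) := by
      apply Prod.ext
      · simp only [Prod.fst_add, Prod.smul_fst, Prod.fst_sum, Pi.smul_apply]
        have h1 : ∀ i : Fin m, p.1 i • (Pi.single i (1:ℝ) : Fin m → ℝ) = (Pi.single i (p.1 i) : Fin m → ℝ) := by
          intro i
          rw [← Pi.single_smul, smul_eq_mul, mul_one]
        rw [Finset.sum_congr rfl fun i _ => h1 i, Finset.univ_sum_single]
        simp
      · simp only [Prod.snd_add, Prod.smul_snd, Prod.snd_sum]
        simp
    conv_lhs => rw [hp]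
    simp only [map_add, map_sum, map_smul, smul_eq_mul]
    rfl
  -- basic elements
  have ha0 : ((fun _ => -1 : Fin m → ℝ), (-1:ℝ)) ∈ s := ⟨fun i => by norm_num, by norm_num⟩
  have hb0 : ((fun i => g i xs - δ : Fin m → ℝ), (ε/2:ℝ)) ∈ C :=
    ⟨xs, fun i => le_rfl, by linarith⟩
  -- u₀ is nonnegative
  have hu0 : 0 ≤ u₀ := by
    by_contra hneg
    push_neg at hneg
    set α : ℝ := φ ((fun _ => 1 : Fin m → ℝ), (1:ℝ)) with hα
    have hval : ∀ η : ℝ, 0 < η → -(η * α) < u₀ := by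
      intro η hη
      have hmem : ((fun _ => -η : Fin m → ℝ), -η) ∈ s :=
        ⟨fun i => by show -η < 0; linarith, by show -η < 0; linarith⟩
      have := hφs _ hmem
      have hsm : ((fun _ => -η : Fin m → ℝ), (-η:ℝ))
          = (-η) • ((fun _ => 1 : Fin m → ℝ), (1:ℝ)) := by
        apply Prod.ext
        · funext j; simp
        · simp
      rw [hsm, map_smul] at this
      simpa using this
    rcases le_or_gt α 0 with hα0 | hα0
    · have := hval 1 one_pos
      nlinarith
    · have := hval (-u₀/(2*α)) (div_pos (by linarith) (by linarith))
      have h2 : -(-u₀/(2*α) * α) = u₀/2 := by field_simp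
      rw [h2] at this
      linarith
  -- each φ value on C is nonnegative
  have hCpos : ∀ p ∈ C, 0 ≤ φ p := fun p hp => le_trans hu0 (hφC p hp)
  -- key inequality
  have hkey : ∀ x, 0 ≤ (∑ i, lam0 i * (g i x - δ)) + μ * (f x - f xs + ε/2) := by
    intro x
    have hmem : ((fun i => g i x - δ : Fin m → ℝ), (f x - f xs + ε/2 : ℝ)) ∈ C :=
      ⟨x, fun i => le_rfl, le_rfl⟩
    have h := hCpos _ hmem
    rw [hdecomp] at h
    calc (0:ℝ) ≤ (∑ i, (g i x - δ) * lam0 i) + (f x - f xs + ε/2) * μ := h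
      _ = (∑ i, lam0 i * (g i x - δ)) + μ * (f x - f xs + ε/2) := by
          rw [mul_comm]
          congr 1
          exact Finset.sum_congr rfl fun i _ => mul_comm _ _
  -- nonnegativity of the multipliers
  have hlamnn : ∀ i, 0 ≤ lam0 i := by
    intro i
    by_contra hneg
    push_neg at hneg
    set α : ℝ := φ ((fun _ => 1 : Fin m → ℝ), (1:ℝ)) with hα
    set β : ℝ := u₀ + α + |α| + 1 with hβ
    have hβpos : 0 < β := by
      have := abs_nonneg α; have := le_abs_self α; have := neg_abs_le α
      rw [hβ]; linarith
    set ρ : ℝ := β / (-lam0 i) with hρ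
    have hρpos : 0 < ρ := div_pos hβpos (by linarith)
    have hmem : ((fun j => -1 + (-ρ) * ((Pi.single i 1 : Fin m → ℝ) j) : Fin m → ℝ), (-1:ℝ)) ∈ s := by
      refine ⟨fun j => ?_, by norm_num⟩
      by_cases hij : j = i
      · subst hij; simp; nlinarith
      · simp [Pi.single_eq_of_ne hij]
    have h := hφs _ hmem
    have hrewr : ((fun j => -1 + (-ρ) * ((Pi.single i 1 : Fin m → ℝ) j) : Fin m → ℝ), (-1:ℝ))
        = (-1 : ℝ) • ((fun _ => 1 : Fin m → ℝ), (1:ℝ))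
          + (-ρ) • ((Pi.single i 1 : Fin m → ℝ), (0:ℝ)) := by
      apply Prod.ext
      · funext j; simp [mul_comm]
      · simp
    rw [hrewr, map_add, map_smul, map_smul] at h
    simp only [smul_eq_mul] at h
    -- h : -1 * α + -ρ * lam0 i < u₀
    have hne0 : lam0 i ≠ 0 := ne_of_lt hneg
    have hval : -ρ * lam0 i = β := by
      rw [hρ]; field_simp
    rw [hval] at h
    rw [hβ] at h
    have := le_abs_self α; have := neg_abs_le α
    linarith
  have hμnn : 0 ≤ μ := by
    by_contra hneg
    push_neg at hneg
    set α : ℝ := φ ((fun _ => 1 : Fin m → ℝ), (1:ℝ)) with hα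
    set β : ℝ := u₀ + α + |α| + 1 with hβ
    have hβpos : 0 < β := by
      have := abs_nonneg α; have := le_abs_self α; have := neg_abs_le α
      rw [hβ]; linarith
    set ρ : ℝ := β / (-μ) with hρ
    have hρpos : 0 < ρ := div_pos hβpos (by linarith)
    have hmem : ((fun _ => -1 : Fin m → ℝ), (-1 + -ρ : ℝ)) ∈ s :=
      ⟨fun j => by show (-1:ℝ) < 0; norm_num, by show (-1:ℝ) + -ρ < 0; linarith⟩
    have h := hφs _ hmem
    have hrewr : ((fun _ => -1 : Fin m → ℝ), (-1 + -ρ : ℝ))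
        = (-1 : ℝ) • ((fun _ => 1 : Fin m → ℝ), (1:ℝ))
          + (-ρ) • ((0 : Fin m → ℝ), (1:ℝ)) := by
      apply Prod.ext
      · funext j; simp
      · simp
    rw [hrewr, map_add, map_smul, map_smul] at h
    simp only [smul_eq_mul] at h
    have hne0 : μ ≠ 0 := ne_of_lt hneg
    have hval : -ρ * μ = β := by rw [hρ]; field_simp
    rw [hval, hβ] at h
    have := le_abs_self α; have := neg_abs_le α
    linarith
  -- μ is strictly positive
  have hμpos : 0 < μ := by
    rcases eq_or_lt_of_le hμnn with h0 | h
    · exfalso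
      have hk := hkey xs
      rw [← h0] at hk
      simp only [zero_mul, add_zero] at hk
      have hterm : ∀ i : Fin m, lam0 i * (g i xs - δ) ≤ lam0 i * (-δ) :=
        fun i => mul_le_mul_of_nonneg_left (by linarith [hxs i]) (hlamnn i)
      have hsumle : (∑ i, lam0 i * (g i xs - δ)) ≤ ∑ i, lam0 i * (-δ) :=
        Finset.sum_le_sum fun i _ => hterm i
      have hsum2 : ∑ i, lam0 i * (-δ) = -δ * (∑ i, lam0 i) := by
        rw [Finset.mul_sum]
        exact Finset.sum_congr rfl fun i _ => by ring
      have hSnn : 0 ≤ ∑ i, lam0 i := Finset.sum_nonneg fun i _ => hlamnn i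
      have hSzero : ∑ i, lam0 i = 0 := by nlinarith [hk, hsumle, hsum2]
      have hzero : ∀ i ∈ Finset.univ, lam0 i = 0 :=
        (Finset.sum_eq_zero_iff_of_nonneg fun i _ => hlamnn i).mp hSzero
      -- φ is identically zero, contradicting separation
      have hφa := hφs _ ha0
      have hφb := hφC _ hb0
      rw [hdecomp] at hφa hφb
      simp only at hφa hφb
      have ha' : (∑ i, (-1:ℝ) * lam0 i) + (-1) * μ < u₀ := hφa
      have hb' : u₀ ≤ (∑ i, (g i xs - δ) * lam0 i) + (ε/2) * μ := hφb
      have hsa : (∑ i, (-1:ℝ) * lam0 i) = 0 :=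
        Finset.sum_eq_zero fun i hi => by rw [hzero i hi, mul_zero]
      have hsb : (∑ i, (g i xs - δ) * lam0 i) = 0 :=
        Finset.sum_eq_zero fun i hi => by rw [hzero i hi, mul_zero]
      rw [hsa, ← h0] at ha'
      rw [hsb, ← h0] at hb'
      simp at ha' hb'
      linarith
    · exact h
  -- conclusion
  refine ⟨fun i => lam0 i / μ, fun i => div_nonneg (hlamnn i) hμpos.le, fun x => ?_⟩
  have hk := hkey x
  have hsum : ∑ i, lam0 i * (g i x - δ)
      = (∑ i, lam0 i * g i x) - δ * (∑ i, lam0 i) := by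
    rw [Finset.mul_sum]
    rw [← Finset.sum_sub_distrib]
    exact Finset.sum_congr rfl fun i _ => by ring
  rw [hsum] at hk
  have hSnn : 0 ≤ ∑ i, lam0 i := Finset.sum_nonneg fun i _ => hlamnn i
  have hdiv : ∑ i, lam0 i / μ * g i x = (∑ i, lam0 i * g i x) / μ := by
    rw [Finset.sum_div]
    exact Finset.sum_congr rfl fun i _ => by rw [div_mul_eq_mul_div]
  rw [hdiv]
  by_contra hA
  push_neg at hA
  have h1 : (∑ i, lam0 i * g i x) / μ + (f x - f xs) + ε/2 ≤ -(ε/2) := by linarith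
  have h2 := mul_le_mul_of_nonneg_left h1 hμpos.le
  rw [mul_add, mul_add] at h2
  have h3 : μ * ((∑ i, lam0 i * g i x) / μ) = ∑ i, lam0 i * g i x := by
    field_simp
  rw [h3] at h2
  nlinarith [hk, mul_nonneg hδ.le hSnn, mul_pos hμpos hε]

open MvPolynomial


/-- Evaluation of the polynomial obtained by substituting `0` for variable `j`. -/
lemma eval_insertNth_subst {n' : ℕ} (j : Fin (n' + 1)) (p : MvPolynomial (Fin (n' + 1)) ℝ)
    (y : Fin n' → ℝ) :
    MvPolynomial.eval y
      (MvPolynomial.aeval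
        (j.insertNth (0 : MvPolynomial (Fin n') ℝ) (fun k => MvPolynomial.X k)) p)
      = MvPolynomial.eval (j.insertNth 0 y) p := by
  have h := MvPolynomial.comp_aeval_apply
    (MvPolynomial.aeval y : MvPolynomial (Fin n') ℝ →ₐ[ℝ] ℝ)
    (f := j.insertNth (0 : MvPolynomial (Fin n') ℝ) (fun k => MvPolynomial.X k)) p
  rw [mv_aeval_eq_eval] at h
  rw [h]
  have h2 : (fun i => (MvPolynomial.aeval y : MvPolynomial (Fin n') ℝ →ₐ[ℝ] ℝ)
      ((j.insertNth (0 : MvPolynomial (Fin n') ℝ) (fun k => MvPolynomial.X k) :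
        Fin (n'+1) → MvPolynomial (Fin n') ℝ) i))
      = (j.insertNth (0:ℝ) y : Fin (n'+1) → ℝ) := by
    funext i
    refine Fin.succAboveCases j ?_ ?_ i
    · rw [Fin.insertNth_apply_same, Fin.insertNth_apply_same, map_zero]
    · intro k
      rw [Fin.insertNth_apply_succAbove, Fin.insertNth_apply_succAbove,
        MvPolynomial.aeval_X]
  rw [h2, mv_aeval_eq_eval]

open MvPolynomial Fin in
lemma main_aux (N : ℕ) : ∀ n m : ℕ, n + m ≤ N →
    ∀ (pf : MvPolynomial (Fin n) ℝ) (pg : Fin m → MvPolynomial (Fin n) ℝ),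
    ConvexOn ℝ Set.univ (fun x : Fin n → ℝ => MvPolynomial.eval x pf) →
    (∀ i, ConvexOn ℝ Set.univ (fun x : Fin n → ℝ => MvPolynomial.eval x (pg i))) →
    ∀ xs : Fin n → ℝ, (∀ i, MvPolynomial.eval xs (pg i) ≤ 0) →
    (∀ x : Fin n → ℝ, (∀ i, MvPolynomial.eval x (pg i) ≤ 0) →
      MvPolynomial.eval xs pf ≤ MvPolynomial.eval x pf) →
    ∀ ε : ℝ, 0 < ε →
    ∃ lam : Fin m → ℝ, (∀ i, 0 ≤ lam i) ∧
      ∀ x : Fin n → ℝ, 0 < MvPolynomial.eval x pf - MvPolynomial.eval xs pf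
        + (∑ i, lam i * MvPolynomial.eval x (pg i)) + ε := by
  induction N with
  | zero =>
    intro n m hnm pf pg hfc hgc xs hxs hmin ε hε
    have hn : n = 0 := by omega
    have hm : m = 0 := by omega
    subst hn; subst hm
    refine ⟨fun _ => 0, fun i => le_rfl, fun x => ?_⟩
    have hx : x = xs := funext fun i => i.elim0
    subst hx
    simp [hε]
  | succ N ih =>
    intro n m hnm pf pg hfc hgc xs hxs hmin ε hε
    by_cases hScase : ∀ k : ℕ, ∃ x : Fin n → ℝ,
        (∀ i, MvPolynomial.eval x (pg i) ≤ 1/((k:ℝ)+1))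
          ∧ MvPolynomial.eval x pf ≤ MvPolynomial.eval xs pf - ε/2
    · -- recession case
      set S : ℕ → Set (Fin n → ℝ) := fun k =>
        {x | (∀ i, MvPolynomial.eval x (pg i) ≤ 1/((k:ℝ)+1))
          ∧ MvPolynomial.eval x pf ≤ MvPolynomial.eval xs pf - ε/2} with hS
      have hSne : ∀ k, (S k).Nonempty := fun k => hScase k
      have hcl : ∀ k, IsClosed (S k) := by
        intro k
        have h1 : S k = (⋂ i, {x : Fin n → ℝ | MvPolynomial.eval x (pg i) ≤ 1/((k:ℝ)+1)})
            ∩ {x : Fin n → ℝ | MvPolynomial.eval x pf ≤ MvPolynomial.eval xs pf - ε/2} := by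
          ext x; simp [hS, Set.mem_iInter]
        rw [h1]
        exact IsClosed.inter
          (isClosed_iInter fun i =>
            isClosed_le (MvPolynomial.continuous_eval (pg i)) continuous_const)
          (isClosed_le (MvPolynomial.continuous_eval pf) continuous_const)
      have hconvS : ∀ k, Convex ℝ (S k) := by
        intro k x hx y hy a b ha hb hab
        constructor
        · intro i
          have hcv := (hgc i).2 (Set.mem_univ x) (Set.mem_univ y) ha hb hab
          simp only [smul_eq_mul] at hcv
          have heq : a * (1/((k:ℝ)+1)) + b * (1/((k:ℝ)+1)) = 1/((k:ℝ)+1) := by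
            linear_combination (1/((k:ℝ)+1)) * hab
          have h1 : a * MvPolynomial.eval x (pg i) ≤ a * (1/((k:ℝ)+1)) :=
            mul_le_mul_of_nonneg_left (hx.1 i) ha
          have h2 : b * MvPolynomial.eval y (pg i) ≤ b * (1/((k:ℝ)+1)) :=
            mul_le_mul_of_nonneg_left (hy.1 i) hb
          linarith
        · have hcv := hfc.2 (Set.mem_univ x) (Set.mem_univ y) ha hb hab
          simp only [smul_eq_mul] at hcv
          have heq : a * (MvPolynomial.eval xs pf - ε/2) + b * (MvPolynomial.eval xs pf - ε/2)
              = MvPolynomial.eval xs pf - ε/2 := by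
            linear_combination (MvPolynomial.eval xs pf - ε/2) * hab
          have h1 : a * MvPolynomial.eval x pf ≤ a * (MvPolynomial.eval xs pf - ε/2) :=
            mul_le_mul_of_nonneg_left hx.2 ha
          have h2 : b * MvPolynomial.eval y pf ≤ b * (MvPolynomial.eval xs pf - ε/2) :=
            mul_le_mul_of_nonneg_left hy.2 hb
          linarith
      have hInter : ∀ x : Fin n → ℝ, (∀ k, x ∈ S k) → False := by
        intro x hx
        have hfeas : ∀ i, MvPolynomial.eval x (pg i) ≤ 0 := by
          intro i
          by_contra hpos
          push_neg at hpos
          obtain ⟨k, hk⟩ := exists_nat_one_div_lt hpos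
          have := (hx k).1 i
          linarith
        have := hmin x hfeas
        have := (hx 0).2
        linarith
      have hmono : ∀ a b : ℕ, b ≤ a → S a ⊆ S b := by
        intro a b hba x hxa
        have hle : 1/((a:ℝ)+1) ≤ 1/((b:ℝ)+1) := by
          apply one_div_le_one_div_of_le
          · positivity
          · have : (b:ℝ) ≤ (a:ℝ) := by exact_mod_cast hba
            linarith
        exact ⟨fun i => le_trans (hxa.1 i) hle, hxa.2⟩
      by_cases hbdd : ∃ k0, Bornology.IsBounded (S k0)
      · exfalso
        obtain ⟨k0, hk0⟩ := hbdd
        obtain ⟨x, hx⟩ := IsCompact.nonempty_iInter_of_sequence_nonempty_isCompact_isClosed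
          (fun k => S (k0 + k))
          (fun k => hmono (k0 + (k+1)) (k0 + k) (by omega))
          (fun k => hSne _)
          (Metric.isCompact_of_isClosed_isBounded (hcl _) (by simpa using hk0))
          (fun k => hcl _)
        apply hInter x
        intro k
        have hxk : x ∈ S (k0 + k) := Set.mem_iInter.mp hx k
        exact hmono (k0 + k) k (by omega) hxk
      · push_neg at hbdd
        obtain ⟨x₀, hx₀⟩ := hSne 0
        obtain ⟨d, hd0, hray⟩ := exists_recession_dir (S 0) (hcl 0) (hconvS 0) x₀ hx₀ (hbdd 0)
        have hraycoord : ∀ t : ℝ, 0 ≤ t → ((fun i => x₀ i + t * d i) ∈ S 0) := by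
          intro t ht
          have he : (fun i => x₀ i + t * d i) = x₀ + t • d := by
            funext i; simp
          rw [he]; exact hray t ht
        obtain ⟨γf, hγf_le, haf⟩ := ray_affine pf hfc x₀ d _ (fun t ht => (hraycoord t ht).2)
        choose γ hγ_le hag using fun i =>
          ray_affine (pg i) (hgc i) x₀ d _ (fun t ht => (hraycoord t ht).1 i)
        have hfeas_ray : ∀ t : ℝ, 0 ≤ t → ∀ i,
            MvPolynomial.eval (fun j => xs j + t * d j) (pg i) ≤ 0 := by
          intro t ht i
          rw [hag i xs t]
          have := mul_nonpos_of_nonneg_of_nonpos ht (hγ_le i)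
          linarith [hxs i]
        have hγf0 : γf = 0 := by
          have h2 := hmin (fun j => xs j + 1 * d j) (hfeas_ray 1 zero_le_one)
          rw [haf xs 1] at h2
          linarith [hγf_le]
        by_cases hall : ∀ i, γ i = 0
        · -- dimension reduction
          rcases n with _ | n'
          · exact absurd (funext fun i => i.elim0 : d = 0) hd0
          obtain ⟨j, hj⟩ : ∃ j, d j ≠ 0 := by
            by_contra hc; push_neg at hc; exact hd0 (funext fun i => hc i)
          have hinvf : ∀ (x : Fin (n'+1) → ℝ) (t : ℝ),
              MvPolynomial.eval (fun i => x i + t * d i) pf = MvPolynomial.eval x pf := by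
            intro x t; rw [haf x t, hγf0]; ring
          have hinvg : ∀ i (x : Fin (n'+1) → ℝ) (t : ℝ),
              MvPolynomial.eval (fun i2 => x i2 + t * d i2) (pg i)
                = MvPolynomial.eval x (pg i) := by
            intro i x t; rw [hag i x t, hall i]; ring
          set π : (Fin (n'+1) → ℝ) → (Fin (n'+1) → ℝ) :=
            fun x => fun i => x i + (-(x j)/(d j)) * d i with hπ
          have hπj : ∀ x, π x j = 0 := by
            intro x; rw [hπ]; field_simp
            ring
          have hπf : ∀ x, MvPolynomial.eval (π x) pf = MvPolynomial.eval x pf :=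
            fun x => hinvf x _
          have hπg : ∀ i x, MvPolynomial.eval (π x) (pg i) = MvPolynomial.eval x (pg i) :=
            fun i x => hinvg i x _
          set σsub : Fin (n'+1) → MvPolynomial (Fin n') ℝ :=
            j.insertNth 0 (fun k => MvPolynomial.X k) with hσ
          set pf' := MvPolynomial.aeval σsub pf with hpf'
          set pg' : Fin m → MvPolynomial (Fin n') ℝ :=
            fun i => MvPolynomial.aeval σsub (pg i) with hpg'
          have hevf : ∀ y, MvPolynomial.eval y pf'
              = MvPolynomial.eval (j.insertNth 0 y) pf :=
            fun y => eval_insertNth_subst j pf y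
          have hevg : ∀ i y, MvPolynomial.eval y (pg' i)
              = MvPolynomial.eval (j.insertNth 0 y) (pg i) :=
            fun i y => eval_insertNth_subst j (pg i) y
          have hembadd : ∀ (a b : ℝ) (y y' : Fin n' → ℝ),
              (j.insertNth (0:ℝ) (a • y + b • y') : Fin (n'+1) → ℝ)
                = a • (j.insertNth (0:ℝ) y : Fin (n'+1) → ℝ)
                  + b • (j.insertNth (0:ℝ) y' : Fin (n'+1) → ℝ) := by
            intro a b y y'
            funext i
            refine Fin.succAboveCases j ?_ ?_ i
            · rw [Fin.insertNth_apply_same]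
              simp only [Pi.add_apply, Pi.smul_apply, Fin.insertNth_apply_same, smul_eq_mul]
              ring
            · intro k
              rw [Fin.insertNth_apply_succAbove]
              simp only [Pi.add_apply, Pi.smul_apply, Fin.insertNth_apply_succAbove, smul_eq_mul]
          have hfc' : ConvexOn ℝ Set.univ fun y : Fin n' → ℝ => MvPolynomial.eval y pf' := by
            refine ⟨convex_univ, ?_⟩
            intro y _ y' _ a b ha hb hab
            simp only [smul_eq_mul]
            rw [hevf, hevf, hevf, hembadd a b y y']
            have := hfc.2 (Set.mem_univ (j.insertNth (0:ℝ) y))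
              (Set.mem_univ (j.insertNth (0:ℝ) y')) ha hb hab
            simpa using this
          have hgc' : ∀ i, ConvexOn ℝ Set.univ
              fun y : Fin n' → ℝ => MvPolynomial.eval y (pg' i) := by
            intro i
            refine ⟨convex_univ, ?_⟩
            intro y _ y' _ a b ha hb hab
            simp only [smul_eq_mul]
            rw [hevg, hevg, hevg, hembadd a b y y']
            have := (hgc i).2 (Set.mem_univ (j.insertNth (0:ℝ) y))
              (Set.mem_univ (j.insertNth (0:ℝ) y')) ha hb hab
            simpa using this
          have hemb : ∀ x : Fin (n'+1) → ℝ,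
              (j.insertNth (0:ℝ) (fun k => π x (j.succAbove k)) : Fin (n'+1) → ℝ) = π x := by
            intro x
            funext i
            refine Fin.succAboveCases j ?_ ?_ i
            · rw [Fin.insertNth_apply_same]; exact (hπj x).symm
            · intro k; rw [Fin.insertNth_apply_succAbove]
          set ys : Fin n' → ℝ := fun k => π xs (j.succAbove k) with hys
          have hxs' : ∀ i, MvPolynomial.eval ys (pg' i) ≤ 0 := by
            intro i; rw [hevg, hys, hemb xs, hπg]; exact hxs i
          have hmin' : ∀ y, (∀ i, MvPolynomial.eval y (pg' i) ≤ 0) →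
              MvPolynomial.eval ys pf' ≤ MvPolynomial.eval y pf' := by
            intro y hy
            rw [hevf, hevf, hys, hemb xs, hπf]
            apply hmin
            intro i
            have := hy i
            rw [hevg] at this
            exact this
          obtain ⟨lam, hlamnn, hlam⟩ := ih n' m (by omega) pf' pg' hfc' hgc' ys hxs' hmin' ε hε
          refine ⟨lam, hlamnn, fun x => ?_⟩
          have hx := hlam (fun k => π x (j.succAbove k))
          rw [hevf, hevf, hemb x, hys, hemb xs, hπf, hπf] at hx
          have hsum : ∑ i, lam i * MvPolynomial.eval (fun k => π x (j.succAbove k)) (pg' i)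
              = ∑ i, lam i * MvPolynomial.eval x (pg i) := by
            refine Finset.sum_congr rfl fun i _ => ?_
            rw [hevg, hemb x, hπg]
          rw [hsum] at hx
          exact hx
        · -- constraint reduction
          rcases m with _ | m'
          · exact absurd (fun i => i.elim0) hall
          obtain ⟨j₀, hj₀⟩ := not_forall.mp hall
          have hγneg : γ j₀ < 0 := lt_of_le_of_ne (hγ_le j₀) hj₀
          set pg' : Fin m' → MvPolynomial (Fin n) ℝ := fun k => pg (j₀.succAbove k) with hpg'
          have hxs' : ∀ k, MvPolynomial.eval xs (pg' k) ≤ 0 := fun k => hxs _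
          have hmin' : ∀ x, (∀ k, MvPolynomial.eval x (pg' k) ≤ 0) →
              MvPolynomial.eval xs pf ≤ MvPolynomial.eval x pf := by
            intro x hx
            set t₁ : ℝ := max 0 (MvPolynomial.eval x (pg j₀) / (-γ j₀)) with ht₁
            have ht₁nn : 0 ≤ t₁ := le_max_left _ _
            have hfeas : ∀ i, MvPolynomial.eval (fun i2 => x i2 + t₁ * d i2) (pg i) ≤ 0 := by
              intro i
              rw [hag i x t₁]
              by_cases hij : i = j₀
              · subst hij
                have h2 : MvPolynomial.eval x (pg i) / (-γ i) ≤ t₁ := le_max_right _ _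
                rw [div_le_iff₀ (by linarith : (0:ℝ) < -γ i)] at h2
                nlinarith
              · obtain ⟨k, hk⟩ := Fin.exists_succAbove_eq hij
                have hxk := hx k
                rw [hpg'] at hxk
                simp only at hxk
                rw [hk] at hxk
                have ht := mul_nonpos_of_nonneg_of_nonpos ht₁nn (hγ_le i)
                linarith
            have hfx := hmin _ hfeas
            rw [haf x t₁, hγf0] at hfx
            linarith
          obtain ⟨lam', hlamnn', hlam'⟩ := ih n m' (by omega) pf pg' hfc
            (fun k => hgc _) xs hxs' hmin' ε hε
          refine ⟨j₀.insertNth 0 lam', fun i => ?_, fun x => ?_⟩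
          · refine Fin.succAboveCases j₀ ?_ ?_ i
            · rw [Fin.insertNth_apply_same]
            · intro k
              rw [Fin.insertNth_apply_succAbove]
              exact hlamnn' k
          · have hsum : ∑ i, (j₀.insertNth (0:ℝ) lam' : Fin (m'+1) → ℝ) i
                * MvPolynomial.eval x (pg i)
                = ∑ k, lam' k * MvPolynomial.eval x (pg' k) := by
              rw [Fin.sum_univ_succAbove
                (fun i => (j₀.insertNth (0:ℝ) lam' : Fin (m'+1) → ℝ) i
                  * MvPolynomial.eval x (pg i)) j₀]
              simp only [Fin.insertNth_apply_same, Fin.insertNth_apply_succAbove, zero_mul,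
                zero_add]
              rfl
            rw [hsum]
            exact hlam' x
    · -- separation case
      push_neg at hScase
      obtain ⟨k, hk⟩ := hScase
      refine separation_multipliers (fun x => MvPolynomial.eval x pf)
        (fun i x => MvPolynomial.eval x (pg i)) hfc hgc xs hxs (1/((k:ℝ)+1)) ε
        (by positivity) hε ?_
      rintro ⟨x, h1, h2⟩
      exact absurd h2 (by intro h; linarith [hk x h1, h])

/-- Approximate Lagrangian positivity: there exist nonnegative multipliers making the
`ε`-shifted Lagrangian everywhere positive. -/
theorem approx_lagrangian_positivity {n m : ℕ}
    (pf : MvPolynomial (Fin n) ℝ) (pg : Fin m → MvPolynomial (Fin n) ℝ)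
    (f : (Fin n → ℝ) → ℝ) (g : Fin m → (Fin n → ℝ) → ℝ)
    (hf : ∀ x, f x = MvPolynomial.eval x pf)
    (hg : ∀ i x, g i x = MvPolynomial.eval x (pg i))
    (hfc : ConvexOn ℝ Set.univ f) (hgc : ∀ i, ConvexOn ℝ Set.univ (g i))
    (K : Set (Fin n → ℝ)) (hK : K = {x | ∀ i, g i x ≤ 0})
    (xs : Fin n → ℝ) (hxs : xs ∈ K) (hmin : ∀ x ∈ K, f xs ≤ f x)
    (ε : ℝ) (hε : 0 < ε) :
    ∃ lam : Fin m → ℝ, (∀ i, 0 ≤ lam i) ∧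
      ∀ x : Fin n → ℝ, 0 < f x - f xs + (∑ i, lam i * g i x) + ε := by
  have hfeq : f = fun x => MvPolynomial.eval x pf := funext hf
  have hgeq : ∀ i, g i = fun x => MvPolynomial.eval x (pg i) := fun i => funext (hg i)
  subst hK
  have hfc' : ConvexOn ℝ Set.univ (fun x : Fin n → ℝ => MvPolynomial.eval x pf) :=
    hfeq ▸ hfc
  have hgc' : ∀ i, ConvexOn ℝ Set.univ (fun x : Fin n → ℝ => MvPolynomial.eval x (pg i)) :=
    fun i => hgeq i ▸ hgc i
  have hxs' : ∀ i, MvPolynomial.eval xs (pg i) ≤ 0 := fun i => (hg i xs) ▸ hxs i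
  have hmin' : ∀ x : Fin n → ℝ, (∀ i, MvPolynomial.eval x (pg i) ≤ 0) →
      MvPolynomial.eval xs pf ≤ MvPolynomial.eval x pf := by
    intro x hx
    rw [← hf x, ← hf xs]
    exact hmin x (fun i => (hg i x) ▸ hx i)
  obtain ⟨lam, hnn, hpos⟩ := main_aux (n + m) n m le_rfl pf pg hfc' hgc' xs hxs' hmin' ε hε
  refine ⟨lam, hnn, fun x => ?_⟩
  have := hpos x
  rw [hf x, hf xs]
  have hsum : ∑ i, lam i * g i x = ∑ i, lam i * MvPolynomial.eval x (pg i) :=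
    Finset.sum_congr rfl fun i _ => by rw [hg i x]
  rw [hsum]
  exact this
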